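/- arXiv:2008.06394 — 3 statements merged into one kernel-verified Lean document; each statement's English description precedes it below -/
import Mathlib

section
/- Let P be a Markov (probability) kernel on ℝⁿ that is strong Feller, i.e. for every bounded Borel measurable f : ℝⁿ → ℝ the map x ↦ ∫ f d(P x) is continuous, and irreducible, i.e. for every x ∈ ℝⁿ and every nonempty open ball B ⊆ ℝⁿ one has (P x)(B) > 0. Then P possesses at most one invariant probability measure: if μ₁ and μ₂ are probability measures on ℝⁿ with μ₁.bind P = μ₁ and μ₂.bind P = μ₂, then μ₁ = μ₂. -/
open MeasureTheory

open scoped ENNReal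

/-- Core level-set lemma: if `ν` is invariant for the kernel `P` and
`ν.withDensity h` is invariant as well (expressed via `hinvd`), then for any
level `c ≤ 1`, the set `B = {h > c}` satisfies `P x B = 1` for a.e. `x ∈ B`
and `P x B = 0` for a.e. `x` with `h x < c`. -/
lemma stmt_5_core {α : Type*} [MeasurableSpace α]
    (P : α → Measure α) (hprob : ∀ x, IsProbabilityMeasure (P x))
    (hmeas : ∀ A : Set α, MeasurableSet A → Measurable (fun x => P x A))
    (ν : Measure α) [IsFiniteMeasure ν]
    (h : α → ℝ≥0∞) (hhm : Measurable h) (hh1 : ∀ x, h x ≤ 1)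
    (hinv : ∀ B : Set α, MeasurableSet B → ν B = ∫⁻ x, P x B ∂ν)
    (hinvd : ∀ B : Set α, MeasurableSet B →
      ∫⁻ x in B, h x ∂ν = ∫⁻ x, h x * P x B ∂ν)
    (c : ℝ≥0∞) (hc : c ≤ 1) :
    (∀ᵐ x ∂ν, c < h x → P x {y | c < h y} = 1) ∧
    (∀ᵐ x ∂ν, h x < c → P x {y | c < h y} = 0) := by
  have hcne : c ≠ ∞ := (hc.trans_lt ENNReal.one_lt_top).ne
  set B : Set α := {y | c < h y} with hBdef
  have hBm : MeasurableSet B := measurableSet_lt measurable_const hhm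
  set g : α → ℝ≥0∞ := fun x => P x B with hgdef
  have hgm : Measurable g := hmeas B hBm
  have hg1 : ∀ x, g x ≤ 1 := fun x => by
    haveI := hprob x; exact prob_le_one
  set a : α → ℝ≥0∞ := fun x => h x - c with hadef
  set b : α → ℝ≥0∞ := fun x => c - h x with hbdef
  have ham : Measurable a := hhm.sub measurable_const
  have hbm : Measurable b := measurable_const.sub hhm
  have ha_le : ∀ x, a x ≤ 1 := fun x => tsub_le_self.trans (hh1 x)
  have ha0 : ∀ x, x ∉ B → a x = 0 := by
    intro x hx
    have : h x ≤ c := not_lt.mp hx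
    simp [hadef, tsub_eq_zero_of_le this]
  -- pointwise identity `h + b = c + a`
  have hpt : ∀ x, h x + b x = c + a x := by
    intro x
    rcases le_total (h x) c with hx | hx
    · simp [hadef, hbdef, tsub_eq_zero_of_le hx, add_tsub_cancel_of_le hx]
    · simp [hadef, hbdef, tsub_eq_zero_of_le hx, add_tsub_cancel_of_le hx]
  -- finiteness facts
  have hatop : ∫⁻ x, a x ∂ν ≠ ∞ := by
    have h1 : ∫⁻ x, a x ∂ν ≤ ∫⁻ _, 1 ∂ν := lintegral_mono ha_le
    have h2 : ∫⁻ _, (1 : ℝ≥0∞) ∂ν = ν Set.univ := by simp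
    exact ((h1.trans_eq h2).trans_lt (measure_lt_top ν _)).ne
  have hcν : c * ν B ≠ ∞ := ENNReal.mul_ne_top hcne (measure_ne_top ν B)
  -- the restricted integral of `h` over `B`
  have haB : ∫⁻ x in B, a x ∂ν = ∫⁻ x, a x ∂ν := by
    rw [← lintegral_indicator hBm]
    congr 1
    funext x
    by_cases hx : x ∈ B
    · simp [hx]
    · simp [hx, ha0 x hx]
  have hμB : ∫⁻ x in B, h x ∂ν = c * ν B + ∫⁻ x, a x ∂ν := by
    have h1 : ∀ x ∈ B, h x = c + a x := by
      intro x hx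
      have hcx : c ≤ h x := le_of_lt hx
      simp [hadef, add_tsub_cancel_of_le hcx]
    rw [setLIntegral_congr_fun hBm (fun x hx => h1 x hx),
      lintegral_add_left measurable_const, setLIntegral_const, haB]
  -- main equation
  have hkey : ∫⁻ x, a x ∂ν + ∫⁻ x, b x * g x ∂ν = ∫⁻ x, a x * g x ∂ν := by
    have e0 : ∀ x, h x * g x + b x * g x = c * g x + a x * g x := by
      intro x
      rw [← add_mul, ← add_mul, hpt x]
    have e1 : ∫⁻ x, (h x * g x + b x * g x) ∂ν
        = ∫⁻ x, (c * g x + a x * g x) ∂ν := lintegral_congr e0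
    rw [lintegral_add_left (f := fun x => h x * g x) (hhm.mul hgm),
      lintegral_add_left (f := fun x => c * g x) (measurable_const.mul hgm)]
      at e1
    have e2 : ∫⁻ x, h x * g x ∂ν = c * ν B + ∫⁻ x, a x ∂ν := by
      rw [← hinvd B hBm, hμB]
    have e3 : ∫⁻ x, c * g x ∂ν = c * ν B := by
      rw [lintegral_const_mul c hgm, ← hinv B hBm]
    rw [e2, e3, add_assoc] at e1
    exact (ENNReal.add_right_inj hcν).mp e1
  have hle : ∫⁻ x, a x * g x ∂ν ≤ ∫⁻ x, a x ∂ν := by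
    refine lintegral_mono fun x => ?_
    calc a x * g x ≤ a x * 1 := mul_le_mul_right (hg1 x) _
      _ = a x := mul_one _
  -- deduce the two vanishing integrals
  have hbg0 : ∫⁻ x, b x * g x ∂ν = 0 := by
    have h1 : ∫⁻ x, a x ∂ν + ∫⁻ x, b x * g x ∂ν ≤ ∫⁻ x, a x ∂ν + 0 := by
      rw [add_zero]; exact hkey.le.trans hle
    simpa using (ENNReal.add_le_add_iff_left hatop).mp h1
  have hag : ∫⁻ x, a x * g x ∂ν = ∫⁻ x, a x ∂ν := by
    rw [← hkey, hbg0, add_zero]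
  have hagtop : ∫⁻ x, a x * g x ∂ν ≠ ∞ := by rw [hag]; exact hatop
  have hag0 : ∫⁻ x, a x * (1 - g x) ∂ν = 0 := by
    have e0 : ∀ x, a x * g x + a x * (1 - g x) = a x := by
      intro x
      rw [← mul_add, add_tsub_cancel_of_le (hg1 x), mul_one]
    have e1 : ∫⁻ x, (a x * g x + a x * (1 - g x)) ∂ν = ∫⁻ x, a x ∂ν :=
      lintegral_congr e0
    rw [lintegral_add_left (f := fun x => a x * g x) (ham.mul hgm), hag] at e1
    exact (ENNReal.add_right_inj hatop).mp (by rw [add_zero]; exact e1)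
  constructor
  · have := (lintegral_eq_zero_iff (ham.mul (measurable_const.sub hgm))).mp hag0
    filter_upwards [this] with x hx hlt
    have hax : a x ≠ 0 := by
      simp only [hadef]
      rw [Ne, tsub_eq_zero_iff_le]
      exact not_le.mpr hlt
    have : (1 : ℝ≥0∞) - g x = 0 := by
      rcases mul_eq_zero.mp hx with h' | h'
      · exact absurd h' hax
      · exact h'
    have h1 : (1 : ℝ≥0∞) ≤ g x := tsub_eq_zero_iff_le.mp this
    exact le_antisymm (hg1 x) h1
  · have := (lintegral_eq_zero_iff (hbm.mul hgm)).mp hbg0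
    filter_upwards [this] with x hx hlt
    have hbx : b x ≠ 0 := by
      simp only [hbdef]
      rw [Ne, tsub_eq_zero_iff_le]
      exact not_le.mpr hlt
    rcases mul_eq_zero.mp hx with h' | h'
    · exact absurd h' hbx
    · exact h'

/-- A strong Feller and irreducible Markov kernel on `ℝⁿ` possesses at most one
invariant probability measure. -/
theorem stmt_5 (n : ℕ)
    (P : EuclideanSpace ℝ (Fin n) → Measure (EuclideanSpace ℝ (Fin n)))
    (hprob : ∀ x, IsProbabilityMeasure (P x))
    (hmeas : ∀ A : Set (EuclideanSpace ℝ (Fin n)), MeasurableSet A →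
      Measurable (fun x => P x A))
    (hSF : ∀ f : EuclideanSpace ℝ (Fin n) → ℝ, Measurable f →
      (∃ M, ∀ x, |f x| ≤ M) → Continuous (fun x => ∫ y, f y ∂(P x)))
    (hIrr : ∀ x (z : EuclideanSpace ℝ (Fin n)) (r : ℝ), 0 < r →
      0 < P x (Metric.ball z r))
    (μ₁ μ₂ : Measure (EuclideanSpace ℝ (Fin n)))
    (hμ₁ : IsProbabilityMeasure μ₁) (hμ₂ : IsProbabilityMeasure μ₂)
    (hinv₁ : μ₁.bind P = μ₁) (hinv₂ : μ₂.bind P = μ₂) :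
    μ₁ = μ₂ := by
  by_contra hne
  set E := EuclideanSpace ℝ (Fin n)
  set ν : Measure E := μ₁ + μ₂ with hνdef
  have hPm : Measurable P := Measure.measurable_of_measurable_coe P hmeas
  have hbind : ∀ (μ : Measure E), μ.bind P = μ →
      ∀ B : Set E, MeasurableSet B → μ B = ∫⁻ x, P x B ∂μ := by
    intro μ hμ B hB
    conv_lhs => rw [← hμ]
    exact Measure.bind_apply hB hPm.aemeasurable
  have hνuniv : ν Set.univ = 2 := by
    rw [hνdef, Measure.add_apply, measure_univ, measure_univ]
    exact one_add_one_eq_two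
  have hinvν : ∀ B : Set E, MeasurableSet B → ν B = ∫⁻ x, P x B ∂ν := by
    intro B hB
    rw [hνdef, Measure.add_apply, hbind μ₁ hinv₁ B hB, hbind μ₂ hinv₂ B hB,
      lintegral_add_measure]
  have hac : μ₁ ≪ ν := Measure.absolutelyContinuous_of_le (Measure.le_add_right le_rfl)
  set h0 : E → ℝ≥0∞ := μ₁.rnDeriv ν with h0def
  have h0le : h0 ≤ᵐ[ν] 1 := Measure.rnDeriv_le_one_of_le (Measure.le_add_right le_rfl)
  set h : E → ℝ≥0∞ := fun x => min (h0 x) 1 with hdef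
  have hhm : Measurable h := (Measure.measurable_rnDeriv _ _).min measurable_const
  have hh1 : ∀ x, h x ≤ 1 := fun x => min_le_right _ _
  have haeh : h =ᵐ[ν] h0 := by
    filter_upwards [h0le] with x hx
    simp only [Pi.one_apply] at hx
    simp [hdef, min_eq_left hx]
  have hwd : ν.withDensity h = μ₁ := by
    rw [withDensity_congr_ae haeh]
    haveI : IsFiniteMeasure ν := inferInstanceAs (IsFiniteMeasure (μ₁ + μ₂))
    haveI : μ₁.HaveLebesgueDecomposition ν := Measure.haveLebesgueDecomposition_of_sigmaFinite μ₁ ν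
    exact Measure.withDensity_rnDeriv_eq μ₁ ν hac
  have hinvd : ∀ B : Set E, MeasurableSet B →
      ∫⁻ x in B, h x ∂ν = ∫⁻ x, h x * P x B ∂ν := by
    intro B hB
    calc ∫⁻ x in B, h x ∂ν = (ν.withDensity h) B := (withDensity_apply h hB).symm
      _ = μ₁ B := by rw [hwd]
      _ = ∫⁻ x, P x B ∂μ₁ := hbind μ₁ hinv₁ B hB
      _ = ∫⁻ x, P x B ∂(ν.withDensity h) := by rw [hwd]
      _ = ∫⁻ x, (h * fun x => P x B) x ∂ν :=
          lintegral_withDensity_eq_lintegral_mul ν hhm (hmeas B hB)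
      _ = ∫⁻ x, h x * P x B ∂ν := rfl
  -- if h = 1/2 a.e. then μ₁ = μ₂
  have hconst : ¬ (h =ᵐ[ν] fun _ => (2 : ℝ≥0∞)⁻¹) := by
    intro hcontra
    apply hne
    have hμν : μ₁ = (2 : ℝ≥0∞)⁻¹ • ν := by
      rw [← hwd, withDensity_congr_ae hcontra, withDensity_const]
    ext s hs
    have h1 : μ₁ s = 2⁻¹ * (μ₁ s + μ₂ s) := by
      conv_lhs => rw [hμν]
      simp [hνdef, Measure.add_apply, mul_add]
    have h2 : (2 : ℝ≥0∞) * μ₁ s = μ₁ s + μ₂ s := by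
      calc (2 : ℝ≥0∞) * μ₁ s = 2 * (2⁻¹ * (μ₁ s + μ₂ s)) := by rw [← h1]
        _ = μ₁ s + μ₂ s := by
            rw [← mul_assoc, ENNReal.mul_inv_cancel (by norm_num) (by norm_num), one_mul]
    rw [two_mul] at h2
    exact (ENNReal.add_right_inj (measure_ne_top μ₁ s)).mp h2
  -- ∫ h dν = 1 and ∫ (1/2) dν = 1
  have hinth : ∫⁻ x, h x ∂ν = 1 := by
    have : (ν.withDensity h) Set.univ = ∫⁻ x, h x ∂ν := by
      rw [withDensity_apply h MeasurableSet.univ, Measure.restrict_univ]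
    rw [← this, hwd, measure_univ]
  have hinthalf : ∫⁻ _, (2 : ℝ≥0∞)⁻¹ ∂ν = 1 := by
    rw [lintegral_const, hνuniv]
    rw [ENNReal.inv_mul_cancel] <;> norm_num
  -- positivity of both level sets
  have hApos : 0 < ν {y | (2 : ℝ≥0∞)⁻¹ < h y} := by
    rcases eq_zero_or_pos (ν {y | (2 : ℝ≥0∞)⁻¹ < h y}) with h0' | h0'
    · exfalso
      apply hconst
      have hle2 : h ≤ᵐ[ν] fun _ => (2 : ℝ≥0∞)⁻¹ := by
        rw [Filter.EventuallyLE, ae_iff]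
        convert h0' using 2
        ext x
        simp only [Set.mem_setOf_eq, not_le]
      have hsub : ∫⁻ x, ((2 : ℝ≥0∞)⁻¹ - h x) ∂ν = 0 := by
        rw [lintegral_sub hhm (by rw [hinth]; exact ENNReal.one_ne_top) hle2, hinthalf, hinth,
          tsub_self]
      have := (lintegral_eq_zero_iff (measurable_const.sub hhm)).mp hsub
      filter_upwards [this, hle2] with x hx hx2
      have : (2 : ℝ≥0∞)⁻¹ ≤ h x := tsub_eq_zero_iff_le.mp hx
      exact le_antisymm hx2 this
    · exact h0'
  have hCpos : 0 < ν {y | h y < (2 : ℝ≥0∞)⁻¹} := by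
    rcases eq_zero_or_pos (ν {y | h y < (2 : ℝ≥0∞)⁻¹}) with h0' | h0'
    · exfalso
      apply hconst
      have hle2 : (fun _ => (2 : ℝ≥0∞)⁻¹) ≤ᵐ[ν] h := by
        rw [Filter.EventuallyLE, ae_iff]
        convert h0' using 2
        ext x
        simp only [Set.mem_setOf_eq, not_le]
      have hsub : ∫⁻ x, (h x - (2 : ℝ≥0∞)⁻¹) ∂ν = 0 := by
        rw [lintegral_sub measurable_const (by rw [hinthalf]; exact ENNReal.one_ne_top) hle2,
          hinthalf, hinth, tsub_self]
      have := (lintegral_eq_zero_iff (hhm.sub measurable_const)).mp hsub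
      filter_upwards [this, hle2] with x hx hx2
      have : h x ≤ (2 : ℝ≥0∞)⁻¹ := tsub_eq_zero_iff_le.mp hx
      exact le_antisymm this hx2
    · exact h0'
  -- decreasing sequence of levels
  set c : ℕ → ℝ≥0∞ := fun k => 2⁻¹ + ((k : ℝ≥0∞) + 2)⁻¹ with hcdef
  have hc_le_one : ∀ k, c k ≤ 1 := by
    intro k
    have h1 : ((k : ℝ≥0∞) + 2)⁻¹ ≤ 2⁻¹ := by
      apply ENNReal.inv_le_inv.mpr
      exact le_add_self
    calc c k ≤ 2⁻¹ + 2⁻¹ := add_le_add_right h1 _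
      _ = 1 := by rw [ENNReal.inv_two_add_inv_two]
  have hc_gt : ∀ k, (2 : ℝ≥0∞)⁻¹ < c k := by
    intro k
    apply ENNReal.lt_add_right (by norm_num)
    apply ENNReal.inv_ne_zero.mpr
    exact (ENNReal.add_lt_top.mpr ⟨ENNReal.natCast_lt_top k, by norm_num⟩).ne
  set A : Set E := {y | (2 : ℝ≥0∞)⁻¹ < h y} with hAdef
  have hAm : MeasurableSet A := measurableSet_lt measurable_const hhm
  have hAunion : A = ⋃ k, {y | c k < h y} := by
    ext x
    simp only [Set.mem_iUnion, Set.mem_setOf_eq, hAdef]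
    constructor
    · intro hx
      have hne0 : h x - 2⁻¹ ≠ 0 := by
        rw [Ne, tsub_eq_zero_iff_le]
        exact not_le.mpr hx
      obtain ⟨m, hm⟩ := ENNReal.exists_inv_nat_lt hne0
      refine ⟨m, ?_⟩
      have h1 : ((m : ℝ≥0∞) + 2)⁻¹ ≤ ((m : ℝ≥0∞))⁻¹ := by
        apply ENNReal.inv_le_inv.mpr
        exact le_add_right le_rfl
      have h2 : c m < 2⁻¹ + (h x - 2⁻¹) := by
        rw [hcdef]
        exact ENNReal.add_lt_add_left (by norm_num) (h1.trans_lt hm)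
      rwa [add_tsub_cancel_of_le hx.le] at h2
    · rintro ⟨k, hk⟩
      exact (hc_gt k).trans hk
  have hmono : Monotone (fun k => {y | c k < h y}) := by
    intro i j hij x hx
    simp only [Set.mem_setOf_eq] at hx ⊢
    refine lt_of_le_of_lt ?_ hx
    apply add_le_add_right
    apply ENNReal.inv_le_inv.mpr
    exact add_le_add_left (by exact_mod_cast Nat.cast_le.mpr hij) _
  -- a.e. dichotomy for P x A
  have hcore_half := stmt_5_core P hprob hmeas ν h hhm hh1 hinvν hinvd 2⁻¹ (by norm_num)
  have hcore_k : ∀ k : ℕ, ∀ᵐ x ∂ν, h x < c k → P x {y | c k < h y} = 0 := fun k =>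
    (stmt_5_core P hprob hmeas ν h hhm hh1 hinvν hinvd (c k) (hc_le_one k)).2
  have hAE : ∀ᵐ x ∂ν, ((2 : ℝ≥0∞)⁻¹ < h x → P x A = 1) ∧
      (h x ≤ (2 : ℝ≥0∞)⁻¹ → P x A = 0) := by
    filter_upwards [hcore_half.1, ae_all_iff.mpr hcore_k] with x hx1 hx2
    refine ⟨hx1, fun hle => ?_⟩
    have hPA : P x A = ⨆ k, P x {y | c k < h y} := by
      rw [hAunion]
      exact Directed.measure_iUnion (μ := P x) hmono.directed_le
    rw [hPA]
    simp only [ENNReal.iSup_eq_zero]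
    intro k
    exact hx2 k (hle.trans_lt (hc_gt k))
  -- continuity of x ↦ (P x A).toReal
  set G : E → ℝ := fun x => (P x A).toReal with hGdef
  have hGcont : Continuous G := by
    have hrw : G = fun x => ∫ y, A.indicator (fun _ => (1 : ℝ)) y ∂(P x) := by
      funext x
      rw [integral_indicator_const (1 : ℝ) hAm, smul_eq_mul, mul_one]
      rfl
    rw [hrw]
    apply hSF
    · exact measurable_const.indicator hAm
    · refine ⟨1, fun x => ?_⟩
      by_cases hx : x ∈ A <;> simp [hx]
  -- full support of ν
  have hpos : ∀ U : Set E, IsOpen U → U.Nonempty → 0 < ν U := by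
    rintro U hU ⟨z, hz⟩
    obtain ⟨r, hr, hball⟩ := Metric.isOpen_iff.mp hU z hz
    have h1 : 0 < ν (Metric.ball z r) := by
      rw [hinvν _ measurableSet_ball,
        lintegral_pos_iff_support (hmeas _ measurableSet_ball)]
      have hsupp : Function.support (fun x => P x (Metric.ball z r)) = Set.univ :=
        Set.eq_univ_of_forall fun x => (hIrr x z r hr).ne'
      rw [hsupp, hνuniv]
      norm_num
    exact h1.trans_le (measure_mono hball)
  -- the clopen argument
  set S1 : Set E := {x | G x = 1} with hS1def
  set S0 : Set E := {x | G x = 0} with hS0def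
  have hS1closed : IsClosed S1 := isClosed_eq hGcont continuous_const
  have hS0closed : IsClosed S0 := isClosed_eq hGcont continuous_const
  have hG1 : ∀ᵐ x ∂ν, x ∈ A → x ∈ S1 := by
    filter_upwards [hAE] with x hx hxA
    have : P x A = 1 := hx.1 hxA
    simp [hS1def, hGdef, this]
  have hG0 : ∀ᵐ x ∂ν, x ∈ {y | h y < (2 : ℝ≥0∞)⁻¹} → x ∈ S0 := by
    filter_upwards [hAE] with x hx hxC
    have : P x A = 0 := hx.2 (le_of_lt hxC)
    simp [hS0def, hGdef, this]
  have hS1pos : 0 < ν S1 := by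
    have : ν A ≤ ν S1 := measure_mono_ae hG1
    exact hApos.trans_le this
  have hS0pos : 0 < ν S0 := by
    have : ν {y | h y < (2 : ℝ≥0∞)⁻¹} ≤ ν S0 := measure_mono_ae hG0
    exact hCpos.trans_le this
  have hS1ne : S1.Nonempty := nonempty_of_measure_ne_zero hS1pos.ne'
  have hS0ne : S0.Nonempty := nonempty_of_measure_ne_zero hS0pos.ne'
  have hcover : S0 ∪ S1 = Set.univ := by
    by_contra hcov
    have hUopen : IsOpen (S0 ∪ S1)ᶜ := (hS0closed.union hS1closed).isOpen_compl
    have hUne : (S0 ∪ S1)ᶜ.Nonempty := by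
      rw [Set.nonempty_compl]
      exact hcov
    have hUpos : 0 < ν (S0 ∪ S1)ᶜ := hpos _ hUopen hUne
    have hU0 : ν (S0 ∪ S1)ᶜ = 0 := by
      have hae : ∀ᵐ x ∂ν, x ∈ S0 ∪ S1 := by
        filter_upwards [hAE] with x hx
        rcases le_or_gt (h x) (2 : ℝ≥0∞)⁻¹ with hle | hlt
        · left
          simp [hS0def, hGdef, hx.2 hle]
        · right
          simp [hS1def, hGdef, hx.1 hlt]
      rw [ae_iff] at hae
      simpa [Set.compl_def] using hae
    exact absurd hU0 hUpos.ne'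
  have hdisj : S0 ∩ S1 = ∅ := by
    ext x
    simp only [Set.mem_inter_iff, Set.mem_empty_iff_false, iff_false, not_and]
    intro hx0 hx1
    rw [hS0def, Set.mem_setOf_eq] at hx0
    rw [hS1def, Set.mem_setOf_eq] at hx1
    rw [hx0] at hx1
    norm_num at hx1
  have hS1compl : S1 = S0ᶜ := by
    ext x
    constructor
    · intro hx1 hx0
      have hmem : x ∈ S0 ∩ S1 := ⟨hx0, hx1⟩
      rw [hdisj] at hmem
      exact hmem
    · intro hx
      have hmem : x ∈ S0 ∪ S1 := hcover ▸ Set.mem_univ x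
      rcases hmem with h' | h'
      · exact absurd h' hx
      · exact h'
  have hclopen : IsClopen S1 := ⟨hS1closed, hS1compl ▸ hS0closed.isOpen_compl⟩
  rcases isClopen_iff.mp hclopen with hS1e | hS1u
  · exact absurd hS1e hS1ne.ne_empty
  · obtain ⟨x, hx0⟩ := hS0ne
    have hx1 : x ∈ S1 := hS1u ▸ Set.mem_univ x
    have : x ∈ S0 ∩ S1 := ⟨hx0, hx1⟩
    rw [hdisj] at this
    exact this
end

section
/- Let n ≥ 1, α > 0, Λ ≥ 1, β ∈ (0,1) and c₀ > 0. Let σ : ℝⁿ → (n × n real matrices) be such that every σ(x) is invertible with Λ^{−1}|ξ| ≤ |σ(x) ξ| ≤ Λ|ξ| for all ξ ∈ ℝⁿ, and ‖σ(x) − σ(z)‖ ≤ c₀ |x − z|^β for all x, z, where ‖·‖ is the Hilbert–Schmidt norm. Define k(x,y) = |det σ(x)|^{−1}·(|y| / |σ(x)^{−1} y|)^{n+α} for y ≠ 0. Then there exists a constant r₂ > 0, depending only on n, α, Λ and c₀, such that |k(x,y) − k(z,y)| ≤ r₂ |x − z|^β for all x, z ∈ ℝⁿ and all y ≠ 0.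 -/
open Finset in
lemma aux_prod_sub_prod_le {ι : Type*} (s : Finset ι) (a b : ι → ℝ) (Λ ε : ℝ)
    (hΛ : 1 ≤ Λ) (hε : 0 ≤ ε)
    (ha : ∀ i ∈ s, |a i| ≤ Λ) (hb : ∀ i ∈ s, |b i| ≤ Λ)
    (hab : ∀ i ∈ s, |a i - b i| ≤ ε) :
    |∏ i ∈ s, a i - ∏ i ∈ s, b i| ≤ s.card * Λ ^ s.card * ε := by
  induction s using Finset.cons_induction with
  | empty => simp [hε]
  | cons i t hi IH =>
    have hΛ0 : (0:ℝ) < Λ := lt_of_lt_of_le one_pos hΛ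
    have hP : |∏ j ∈ t, a j| ≤ Λ ^ t.card := by
      rw [abs_prod]
      calc ∏ j ∈ t, |a j| ≤ ∏ j ∈ t, Λ :=
            Finset.prod_le_prod (fun j _ => abs_nonneg _)
              (fun j hj => ha j (Finset.mem_cons_of_mem hj))
        _ = Λ ^ t.card := by rw [Finset.prod_const]
    have hQ : |∏ j ∈ t, b j| ≤ Λ ^ t.card := by
      rw [abs_prod]
      calc ∏ j ∈ t, |b j| ≤ ∏ j ∈ t, Λ :=
            Finset.prod_le_prod (fun j _ => abs_nonneg _)
              (fun j hj => hb j (Finset.mem_cons_of_mem hj))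
        _ = Λ ^ t.card := by rw [Finset.prod_const]
    have IH' := IH (fun j hj => ha j (Finset.mem_cons_of_mem hj))
      (fun j hj => hb j (Finset.mem_cons_of_mem hj))
      (fun j hj => hab j (Finset.mem_cons_of_mem hj))
    have hai : |a i - b i| ≤ ε := hab i (Finset.mem_cons_self i t)
    have hbi : |b i| ≤ Λ := hb i (Finset.mem_cons_self i t)
    rw [Finset.prod_cons, Finset.prod_cons, Finset.card_cons]
    have key : a i * ∏ j ∈ t, a j - b i * ∏ j ∈ t, b j
        = (a i - b i) * ∏ j ∈ t, a j + b i * (∏ j ∈ t, a j - ∏ j ∈ t, b j) := by ring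
    rw [key]
    have h1 : |(a i - b i) * ∏ j ∈ t, a j| ≤ ε * Λ ^ t.card := by
      rw [abs_mul]; exact mul_le_mul hai hP (abs_nonneg _) hε
    have h2 : |b i * (∏ j ∈ t, a j - ∏ j ∈ t, b j)| ≤ Λ * (t.card * Λ ^ t.card * ε) := by
      rw [abs_mul]
      exact mul_le_mul hbi IH' (abs_nonneg _) (le_of_lt hΛ0)
    calc |(a i - b i) * ∏ j ∈ t, a j + b i * (∏ j ∈ t, a j - ∏ j ∈ t, b j)|
        ≤ ε * Λ ^ t.card + Λ * (t.card * Λ ^ t.card * ε) :=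
          (abs_add_le _ _).trans (add_le_add h1 h2)
      _ ≤ (t.card + 1) * Λ ^ (t.card + 1) * ε := by
          have h4 : (0:ℝ) ≤ Λ ^ t.card := le_of_lt (pow_pos hΛ0 _)
          have h6 : Λ ^ t.card * ε ≤ Λ ^ t.card * Λ * ε :=
            mul_le_mul_of_nonneg_right
              (by nlinarith) hε
          rw [pow_succ]
          nlinarith [Nat.cast_nonneg (α := ℝ) t.card]
      _ = ((t.card + 1 : ℕ) : ℝ) * Λ ^ (t.card + 1) * ε := by push_cast; ring
lemma aux_det_sub_le {n : ℕ} (A B : Matrix (Fin n) (Fin n) ℝ) (Λ ε : ℝ)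
    (hΛ : 1 ≤ Λ) (hε : 0 ≤ ε)
    (hA : ∀ i j, |A i j| ≤ Λ) (hB : ∀ i j, |B i j| ≤ Λ)
    (hAB : ∀ i j, |A i j - B i j| ≤ ε) :
    |A.det - B.det| ≤ (n.factorial : ℝ) * ((n : ℝ) * Λ ^ n * ε) := by
  rw [Matrix.det_apply, Matrix.det_apply, ← Finset.sum_sub_distrib]
  calc |∑ σ : Equiv.Perm (Fin n),
        (Equiv.Perm.sign σ • ∏ i, A (σ i) i - Equiv.Perm.sign σ • ∏ i, B (σ i) i)|
      ≤ ∑ σ : Equiv.Perm (Fin n),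
        |Equiv.Perm.sign σ • ∏ i, A (σ i) i - Equiv.Perm.sign σ • ∏ i, B (σ i) i| :=
        Finset.abs_sum_le_sum_abs _ _
    _ ≤ ∑ σ : Equiv.Perm (Fin n), ((n : ℝ) * Λ ^ n * ε) := by
        refine Finset.sum_le_sum fun σ _ => ?_
        have h := aux_prod_sub_prod_le Finset.univ (fun i => A (σ i) i) (fun i => B (σ i) i)
          Λ ε hΛ hε (fun i _ => hA _ _) (fun i _ => hB _ _) (fun i _ => hAB _ _)
        simp only [Finset.card_univ, Fintype.card_fin] at h
        rw [← smul_sub]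
        rcases Int.units_eq_one_or (Equiv.Perm.sign σ) with hs | hs <;>
          simp [hs, h, abs_sub_comm, h.trans_eq rfl] <;> rw [abs_sub_comm] <;> exact h
    _ = (n.factorial : ℝ) * ((n : ℝ) * Λ ^ n * ε) := by
        rw [Finset.sum_const, Finset.card_univ, Fintype.card_perm, Fintype.card_fin,
          nsmul_eq_mul]

lemma aux_det_le {n : ℕ} (A : Matrix (Fin n) (Fin n) ℝ) (Λ : ℝ) (hΛ : 1 ≤ Λ)
    (hA : ∀ i j, |A i j| ≤ Λ) :
    |A.det| ≤ (n.factorial : ℝ) * Λ ^ n := by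
  rw [Matrix.det_apply]
  calc |∑ σ : Equiv.Perm (Fin n), Equiv.Perm.sign σ • ∏ i, A (σ i) i|
      ≤ ∑ σ : Equiv.Perm (Fin n), |Equiv.Perm.sign σ • ∏ i, A (σ i) i| :=
        Finset.abs_sum_le_sum_abs _ _
    _ ≤ ∑ σ : Equiv.Perm (Fin n), Λ ^ n := by
        refine Finset.sum_le_sum fun σ _ => ?_
        have h : |∏ i, A (σ i) i| ≤ Λ ^ n := by
          rw [Finset.abs_prod]
          calc ∏ i, |A (σ i) i| ≤ ∏ _i : Fin n, Λ :=
              Finset.prod_le_prod (fun i _ => abs_nonneg _) (fun i _ => hA _ _)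
            _ = Λ ^ n := by rw [Finset.prod_const, Finset.card_univ, Fintype.card_fin]
        rcases Int.units_eq_one_or (Equiv.Perm.sign σ) with hs | hs <;> simp [hs, h]
    _ = (n.factorial : ℝ) * Λ ^ n := by
        rw [Finset.sum_const, Finset.card_univ, Fintype.card_perm, Fintype.card_fin,
          nsmul_eq_mul]

lemma aux_norm_eq {n : ℕ} (M : Matrix (Fin n) (Fin n) ℝ) (v : EuclideanSpace ℝ (Fin n)) :
    ‖Matrix.toEuclideanLin M v‖ = Real.sqrt (∑ i, (∑ j, M i j * v j) ^ 2) := by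
  rw [EuclideanSpace.norm_eq]
  congr 1
  refine Finset.sum_congr rfl fun i _ => ?_
  rw [Real.norm_eq_abs, sq_abs]
  congr 1

lemma aux_op_le_hs {n : ℕ} (M : Matrix (Fin n) (Fin n) ℝ) (v : EuclideanSpace ℝ (Fin n)) :
    ‖Matrix.toEuclideanLin M v‖ ≤ Real.sqrt (∑ i, ∑ j, (M i j) ^ 2) * ‖v‖ := by
  rw [aux_norm_eq, EuclideanSpace.norm_eq]
  simp only [Real.norm_eq_abs, sq_abs]
  rw [← Real.sqrt_mul (by positivity)]
  apply Real.sqrt_le_sqrt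
  calc ∑ i, (∑ j, M i j * v j) ^ 2
      ≤ ∑ i, (∑ j, (M i j) ^ 2) * (∑ j, (v j) ^ 2) :=
        Finset.sum_le_sum fun i _ => Finset.sum_mul_sq_le_sq_mul_sq _ _ _
    _ = (∑ i, ∑ j, (M i j) ^ 2) * ∑ j, (v j) ^ 2 := by rw [← Finset.sum_mul]

lemma aux_entry_le {n : ℕ} (M : Matrix (Fin n) (Fin n) ℝ) (Λ : ℝ)
    (h : ∀ v : EuclideanSpace ℝ (Fin n), ‖Matrix.toEuclideanLin M v‖ ≤ Λ * ‖v‖)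
    (i j : Fin n) : |M i j| ≤ Λ := by
  have h1 := h (EuclideanSpace.single j (1:ℝ))
  rw [aux_norm_eq] at h1
  have h2 : ‖EuclideanSpace.single j (1:ℝ)‖ = 1 := by
    simp [EuclideanSpace.norm_single]
  rw [h2, mul_one] at h1
  refine le_trans ?_ h1
  have h3 : ∑ i', (∑ j', M i' j' * (EuclideanSpace.single j (1:ℝ)) j') ^ 2
      = ∑ i', (M i' j) ^ 2 := by
    refine Finset.sum_congr rfl fun i' _ => ?_
    congr 1
    simp [EuclideanSpace.single_apply, Finset.sum_ite_eq']
  rw [h3]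
  rw [← Real.sqrt_sq_eq_abs]
  apply Real.sqrt_le_sqrt
  exact Finset.single_le_sum (f := fun i' => (M i' j)^2) (fun _ _ => sq_nonneg _)
    (Finset.mem_univ i)

lemma aux_hs_sub {n : ℕ} (A B : Matrix (Fin n) (Fin n) ℝ) :
    Real.sqrt (∑ i, ∑ j, ((A - B) i j) ^ 2)
      = Real.sqrt (∑ i, ∑ j, (A i j - B i j) ^ 2) := by
  simp [Matrix.sub_apply]

lemma aux_entry_le_hs {n : ℕ} (M : Matrix (Fin n) (Fin n) ℝ) (i j : Fin n) :
    |M i j| ≤ Real.sqrt (∑ i, ∑ j, (M i j) ^ 2) := by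
  rw [← Real.sqrt_sq_eq_abs]
  apply Real.sqrt_le_sqrt
  calc (M i j)^2 ≤ ∑ j', (M i j') ^ 2 :=
        Finset.single_le_sum (f := fun j' => (M i j')^2) (fun _ _ => sq_nonneg _)
          (Finset.mem_univ j)
    _ ≤ ∑ i', ∑ j', (M i' j') ^ 2 :=
        Finset.single_le_sum (f := fun i' => ∑ j', (M i' j')^2)
          (fun _ _ => Finset.sum_nonneg fun _ _ => sq_nonneg _) (Finset.mem_univ i)

lemma aux_toE_mul {n : ℕ} (A B : Matrix (Fin n) (Fin n) ℝ) (v : EuclideanSpace ℝ (Fin n)) :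
    Matrix.toEuclideanLin (A * B) v = Matrix.toEuclideanLin A (Matrix.toEuclideanLin B v) := by
  simp [Matrix.toEuclideanLin_apply, Matrix.mulVec_mulVec]

lemma aux_toE_one {n : ℕ} (v : EuclideanSpace ℝ (Fin n)) :
    Matrix.toEuclideanLin (1 : Matrix (Fin n) (Fin n) ℝ) v = v := by
  simp [Matrix.toEuclideanLin_apply, Matrix.one_mulVec]

lemma aux_toE_sub {n : ℕ} (A B : Matrix (Fin n) (Fin n) ℝ) (v : EuclideanSpace ℝ (Fin n)) :
    Matrix.toEuclideanLin (A - B) v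
      = Matrix.toEuclideanLin A v - Matrix.toEuclideanLin B v := by
  rw [map_sub]; rfl

lemma aux_rpow_sub_le {p Λ a b : ℝ} (hp : 1 ≤ p) (hΛ : 1 ≤ Λ)
    (ha : 0 < a) (hab : a ≤ b) (hbΛ : b ≤ Λ) :
    b ^ p - a ^ p ≤ p * Λ ^ (p - 1) * (b - a) := by
  have hb : 0 < b := lt_of_lt_of_le ha hab
  have hΛ0 : (0:ℝ) < Λ := lt_of_lt_of_le one_pos hΛ
  have hs : (-1:ℝ) ≤ a / b - 1 := by
    have : 0 ≤ a / b := le_of_lt (div_pos ha hb)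
    linarith
  have hbern := one_add_mul_self_le_rpow_one_add hs hp
  have h1 : (1 + (a / b - 1)) ^ p = a ^ p / b ^ p := by
    rw [show 1 + (a / b - 1) = a / b by ring, Real.div_rpow ha.le hb.le]
  rw [h1] at hbern
  have hbp : (0:ℝ) < b ^ p := Real.rpow_pos_of_pos hb p
  have h2 : (1 + p * (a / b - 1)) * b ^ p ≤ a ^ p := by
    calc (1 + p * (a / b - 1)) * b ^ p ≤ (a ^ p / b ^ p) * b ^ p :=
          mul_le_mul_of_nonneg_right hbern hbp.le
      _ = a ^ p := div_mul_cancel₀ _ (ne_of_gt hbp)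
  have h3 : (1 + p * (a / b - 1)) * b ^ p = b ^ p - p * (b - a) * (b ^ p / b) := by
    field_simp
    ring
  rw [h3] at h2
  have h4 : b ^ p / b = b ^ (p - 1) := by
    rw [Real.rpow_sub hb, Real.rpow_one]
  rw [h4] at h2
  have h5 : b ^ (p - 1) ≤ Λ ^ (p - 1) :=
    Real.rpow_le_rpow hb.le hbΛ (by linarith)
  have h6 : 0 ≤ b - a := by linarith
  nlinarith [mul_le_mul_of_nonneg_right (mul_le_mul_of_nonneg_left h5 (by linarith : (0:ℝ) ≤ p)) h6]

lemma aux_rpow_lip {p Λ a b : ℝ} (hp : 1 ≤ p) (hΛ : 1 ≤ Λ)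
    (ha : 0 < a) (hb : 0 < b) (haΛ : a ≤ Λ) (hbΛ : b ≤ Λ) :
    |a ^ p - b ^ p| ≤ p * Λ ^ (p - 1) * |a - b| := by
  rcases le_total a b with h | h
  · rw [abs_of_nonpos (by nlinarith [Real.rpow_le_rpow ha.le h (by linarith : (0:ℝ) ≤ p)]),
      abs_of_nonpos (by linarith)]
    have := aux_rpow_sub_le hp hΛ ha h hbΛ
    linarith
  · rw [abs_of_nonneg (by nlinarith [Real.rpow_le_rpow hb.le h (by linarith : (0:ℝ) ≤ p)]),
      abs_of_nonneg (by linarith)]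
    have := aux_rpow_sub_le hp hΛ hb h haΛ
    linarith

open MeasureTheory

/-- Hölder continuity of the jump kernel `k(x,y) = |det σ(x)|⁻¹ (|y|/|σ(x)⁻¹y|)^{n+α}`
in its first argument: under uniform ellipticity and Hölder continuity (in the
Hilbert–Schmidt norm) of `σ`, there is `r₂ > 0`, depending only on `n, α, Λ, c₀`,
with `|k(x,y) − k(z,y)| ≤ r₂|x−z|^β` for all `x, z` and `y ≠ 0`. -/
theorem stmt_10 (n : ℕ) (hn : 1 ≤ n) (α Λ β c₀ : ℝ) (hα : 0 < α) (hΛ : 1 ≤ Λ)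
    (hβ : β ∈ Set.Ioo (0 : ℝ) 1) (hc₀ : 0 < c₀) :
    ∃ r₂ : ℝ, 0 < r₂ ∧
      ∀ σ : EuclideanSpace ℝ (Fin n) → Matrix (Fin n) (Fin n) ℝ,
        (∀ x, IsUnit (σ x).det) →
        (∀ x (ξ : EuclideanSpace ℝ (Fin n)),
          Λ⁻¹ * ‖ξ‖ ≤ ‖Matrix.toEuclideanLin (σ x) ξ‖ ∧
            ‖Matrix.toEuclideanLin (σ x) ξ‖ ≤ Λ * ‖ξ‖) →
        (∀ x z, Real.sqrt (∑ i, ∑ j, (σ x i j - σ z i j) ^ 2) ≤ c₀ * ‖x - z‖ ^ β) →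
        ∀ x z (y : EuclideanSpace ℝ (Fin n)), y ≠ 0 →
          abs (|(σ x).det|⁻¹ * (‖y‖ / ‖Matrix.toEuclideanLin (σ x)⁻¹ y‖) ^ ((n : ℝ) + α) -
              |(σ z).det|⁻¹ *
                (‖y‖ / ‖Matrix.toEuclideanLin (σ z)⁻¹ y‖) ^ ((n : ℝ) + α)) ≤
            r₂ * ‖x - z‖ ^ β := by
  have hΛ0 : (0:ℝ) < Λ := lt_of_lt_of_le one_pos hΛ
  have hfac : (0:ℝ) < (n.factorial : ℝ) := by exact_mod_cast Nat.factorial_pos n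
  have hn0 : (0:ℝ) < (n:ℝ) := by exact_mod_cast hn
  set K : ℝ := (n.factorial : ℝ) * Λ ^ n with hKdef
  set p : ℝ := (n : ℝ) + α with hpdef
  have hp1 : (1:ℝ) ≤ p := by
    have : (1:ℝ) ≤ (n:ℝ) := by exact_mod_cast hn
    simp only [hpdef]; linarith
  have hp0 : (0:ℝ) < p := lt_of_lt_of_le one_pos hp1
  have hK0 : (0:ℝ) < K := mul_pos hfac (pow_pos hΛ0 n)
  have hK1 : (1:ℝ) ≤ K := by
    have h1 : (1:ℝ) ≤ (n.factorial : ℝ) := by exact_mod_cast (Nat.factorial_pos n)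
    have h2 : (1:ℝ) ≤ Λ ^ n := one_le_pow₀ hΛ
    calc (1:ℝ) = 1 * 1 := (one_mul 1).symm
      _ ≤ K := mul_le_mul h1 h2 one_pos.le (by linarith)
  refine ⟨c₀ * (K * p * Λ ^ (p - 1) * Λ ^ 4 + Λ ^ p * K ^ 3 * (n:ℝ)), ?_, ?_⟩
  · apply mul_pos hc₀
    apply add_pos
    · exact mul_pos (mul_pos (mul_pos hK0 hp0) (Real.rpow_pos_of_pos hΛ0 _)) (pow_pos hΛ0 4)
    · exact mul_pos (mul_pos (Real.rpow_pos_of_pos hΛ0 _) (pow_pos hK0 3)) hn0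
  intro σ hdet hell hhol x z y hy
  have hy0 : (0:ℝ) < ‖y‖ := norm_pos_iff.mpr hy
  -- general facts about each σ w
  have hop : ∀ w v, ‖Matrix.toEuclideanLin (σ w) v‖ ≤ Λ * ‖v‖ := fun w v => (hell w v).2
  have hlow : ∀ w v, Λ⁻¹ * ‖v‖ ≤ ‖Matrix.toEuclideanLin (σ w) v‖ := fun w v => (hell w v).1
  have hinv_id : ∀ w v, Matrix.toEuclideanLin (σ w) (Matrix.toEuclideanLin (σ w)⁻¹ v) = v := by
    intro w v
    rw [← aux_toE_mul, Matrix.mul_nonsing_inv _ (hdet w), aux_toE_one]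
  have hopInv : ∀ w v, ‖Matrix.toEuclideanLin (σ w)⁻¹ v‖ ≤ Λ * ‖v‖ := by
    intro w v
    have h := hlow w (Matrix.toEuclideanLin (σ w)⁻¹ v)
    rw [hinv_id] at h
    calc ‖Matrix.toEuclideanLin (σ w)⁻¹ v‖
        = Λ * (Λ⁻¹ * ‖Matrix.toEuclideanLin (σ w)⁻¹ v‖) := by
          field_simp
      _ ≤ Λ * ‖v‖ := mul_le_mul_of_nonneg_left h hΛ0.le
  have hlowInv : ∀ w v, Λ⁻¹ * ‖v‖ ≤ ‖Matrix.toEuclideanLin (σ w)⁻¹ v‖ := by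
    intro w v
    have h := hop w (Matrix.toEuclideanLin (σ w)⁻¹ v)
    rw [hinv_id] at h
    rw [inv_mul_le_iff₀ hΛ0]
    exact h
  have hdet_le : ∀ w, |(σ w).det| ≤ K := fun w =>
    aux_det_le _ Λ hΛ (fun i j => aux_entry_le _ Λ (hop w) i j)
  have hdet_ne : ∀ w, (σ w).det ≠ 0 := fun w => (hdet w).ne_zero
  have hdet_ge : ∀ w, K⁻¹ ≤ |(σ w).det| := by
    intro w
    have h1 : ((σ w)⁻¹).det = ((σ w).det)⁻¹ := by
      rw [Matrix.det_nonsing_inv, Ring.inverse_eq_inv]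
    have h2 : |((σ w).det)⁻¹| ≤ K := by
      rw [← h1]
      exact aux_det_le _ Λ hΛ (fun i j => aux_entry_le _ Λ (hopInv w) i j)
    have hd0 : 0 < |(σ w).det| := abs_pos.mpr (hdet_ne w)
    rw [abs_inv] at h2
    have h3 : 1 ≤ K * |(σ w).det| := by
      have := mul_le_mul_of_nonneg_right h2 hd0.le
      rwa [inv_mul_cancel₀ (ne_of_gt hd0)] at this
    have h4 := mul_le_mul_of_nonneg_left h3 (inv_pos.mpr hK0).le
    rwa [mul_one, ← mul_assoc, inv_mul_cancel₀ (ne_of_gt hK0), one_mul] at h4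
  -- Hölder data
  set δ : ℝ := ‖x - z‖ ^ β with hδdef
  have hδ0 : 0 ≤ δ := Real.rpow_nonneg (norm_nonneg _) β
  set ε : ℝ := c₀ * δ with hεdef
  have hε0 : 0 ≤ ε := mul_nonneg hc₀.le hδ0
  have hentry : ∀ i j, |σ x i j - σ z i j| ≤ ε := by
    intro i j
    have h1 := aux_entry_le_hs (σ x - σ z) i j
    simp only [Matrix.sub_apply] at h1
    exact h1.trans (hhol x z)
  have hentry' : ∀ i j, |σ z i j - σ x i j| ≤ ε := by
    intro i j
    rw [abs_sub_comm]; exact hentry i j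
  have hdd : |(σ x).det - (σ z).det| ≤ K * ((n:ℝ) * ε) := by
    have h := aux_det_sub_le (σ x) (σ z) Λ ε hΛ hε0
      (fun i j => aux_entry_le _ Λ (hop x) i j)
      (fun i j => aux_entry_le _ Λ (hop z) i j) hentry
    calc |(σ x).det - (σ z).det| ≤ (n.factorial : ℝ) * ((n:ℝ) * Λ ^ n * ε) := h
      _ = K * ((n:ℝ) * ε) := by rw [hKdef]; ring
  -- inverse vectors
  set ux : EuclideanSpace ℝ (Fin n) := Matrix.toEuclideanLin (σ x)⁻¹ y with huxdef
  set uz : EuclideanSpace ℝ (Fin n) := Matrix.toEuclideanLin (σ z)⁻¹ y with huzdef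
  have hmat : (σ x)⁻¹ - (σ z)⁻¹ = (σ x)⁻¹ * ((σ z - σ x) * (σ z)⁻¹) := by
    rw [Matrix.sub_mul, Matrix.mul_nonsing_inv _ (hdet z), Matrix.mul_sub, Matrix.mul_one,
      ← Matrix.mul_assoc, Matrix.nonsing_inv_mul _ (hdet x), Matrix.one_mul]
  have hdiff : ux - uz = Matrix.toEuclideanLin (σ x)⁻¹
      (Matrix.toEuclideanLin (σ z - σ x) uz) := by
    rw [huxdef, huzdef, ← aux_toE_sub, hmat, aux_toE_mul, aux_toE_mul]
  have hhs' : Real.sqrt (∑ i, ∑ j, ((σ z - σ x) i j) ^ 2) ≤ ε := by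
    rw [aux_hs_sub]
    calc Real.sqrt (∑ i, ∑ j, (σ z i j - σ x i j) ^ 2) ≤ c₀ * ‖z - x‖ ^ β := hhol z x
      _ = ε := by rw [hεdef, hδdef, norm_sub_rev]
  have hnz_up : ‖uz‖ ≤ Λ * ‖y‖ := hopInv z y
  have hnd : ‖ux - uz‖ ≤ Λ ^ 2 * ε * ‖y‖ := by
    rw [hdiff]
    calc ‖Matrix.toEuclideanLin (σ x)⁻¹ (Matrix.toEuclideanLin (σ z - σ x) uz)‖
        ≤ Λ * ‖Matrix.toEuclideanLin (σ z - σ x) uz‖ := hopInv x _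
      _ ≤ Λ * (ε * ‖uz‖) := by
          apply mul_le_mul_of_nonneg_left _ hΛ0.le
          exact (aux_op_le_hs _ _).trans (mul_le_mul_of_nonneg_right hhs' (norm_nonneg _))
      _ ≤ Λ * (ε * (Λ * ‖y‖)) := by
          apply mul_le_mul_of_nonneg_left _ hΛ0.le
          exact mul_le_mul_of_nonneg_left hnz_up hε0
      _ = Λ ^ 2 * ε * ‖y‖ := by ring
  have hnx0 : (0:ℝ) < ‖ux‖ := lt_of_lt_of_le (by positivity) (hlowInv x y)
  have hnz0 : (0:ℝ) < ‖uz‖ := lt_of_lt_of_le (by positivity) (hlowInv z y)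
  have h1 : ‖y‖ ≤ Λ * ‖ux‖ := by
    have h := hlowInv x y
    calc ‖y‖ = Λ * (Λ⁻¹ * ‖y‖) := by field_simp
      _ ≤ Λ * ‖ux‖ := mul_le_mul_of_nonneg_left h hΛ0.le
  have h2 : ‖y‖ ≤ Λ * ‖uz‖ := by
    have h := hlowInv z y
    calc ‖y‖ = Λ * (Λ⁻¹ * ‖y‖) := by field_simp
      _ ≤ Λ * ‖uz‖ := mul_le_mul_of_nonneg_left h hΛ0.le
  set tx : ℝ := ‖y‖ / ‖ux‖ with htxdef
  set tz : ℝ := ‖y‖ / ‖uz‖ with htzdef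
  have htx0 : 0 < tx := div_pos hy0 hnx0
  have htz0 : 0 < tz := div_pos hy0 hnz0
  have htxΛ : tx ≤ Λ := by rw [htxdef, div_le_iff₀ hnx0]; exact h1
  have htzΛ : tz ≤ Λ := by rw [htzdef, div_le_iff₀ hnz0]; exact h2
  have htt : |tx - tz| ≤ Λ ^ 4 * ε := by
    have hne : tx - tz = ‖y‖ * (‖uz‖ - ‖ux‖) / (‖ux‖ * ‖uz‖) := by
      rw [htxdef, htzdef]; field_simp
    rw [hne, abs_div, abs_mul, abs_of_nonneg (norm_nonneg y),
      abs_of_pos (mul_pos hnx0 hnz0), div_le_iff₀ (mul_pos hnx0 hnz0)]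
    have hd : |‖uz‖ - ‖ux‖| ≤ Λ ^ 2 * ε * ‖y‖ := by
      calc |‖uz‖ - ‖ux‖| ≤ ‖uz - ux‖ := abs_norm_sub_norm_le uz ux
        _ = ‖ux - uz‖ := norm_sub_rev uz ux
        _ ≤ Λ ^ 2 * ε * ‖y‖ := hnd
    calc ‖y‖ * |‖uz‖ - ‖ux‖| ≤ ‖y‖ * (Λ ^ 2 * ε * ‖y‖) :=
          mul_le_mul_of_nonneg_left hd (norm_nonneg y)
      _ = Λ ^ 2 * ε * (‖y‖ * ‖y‖) := by ring
      _ ≤ Λ ^ 2 * ε * ((Λ * ‖ux‖) * (Λ * ‖uz‖)) := by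
          apply mul_le_mul_of_nonneg_left _ (by positivity)
          exact mul_le_mul h1 h2 hy0.le (by positivity)
      _ = Λ ^ 4 * ε * (‖ux‖ * ‖uz‖) := by ring
  have hpow : |tx ^ p - tz ^ p| ≤ p * Λ ^ (p - 1) * (Λ ^ 4 * ε) :=
    (aux_rpow_lip hp1 hΛ htx0 htz0 htxΛ htzΛ).trans
      (mul_le_mul_of_nonneg_left htt (by positivity))
  have htzp : tz ^ p ≤ Λ ^ p := Real.rpow_le_rpow htz0.le htzΛ hp0.le
  have htzp0 : 0 ≤ tz ^ p := Real.rpow_nonneg htz0.le p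
  -- determinant inverses
  set dx : ℝ := |(σ x).det| with hdxdef
  set dz : ℝ := |(σ z).det| with hdzdef
  have hdx0 : 0 < dx := abs_pos.mpr (hdet_ne x)
  have hdz0 : 0 < dz := abs_pos.mpr (hdet_ne z)
  have hdxK : dx⁻¹ ≤ K := by
    have := inv_anti₀ (inv_pos.mpr hK0) (hdet_ge x)
    rwa [inv_inv] at this
  have hdzK : dz⁻¹ ≤ K := by
    have := inv_anti₀ (inv_pos.mpr hK0) (hdet_ge z)
    rwa [inv_inv] at this
  have hdiffd : |dz - dx| ≤ K * ((n:ℝ) * ε) := by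
    calc |dz - dx| ≤ |(σ z).det - (σ x).det| := abs_abs_sub_abs_le_abs_sub _ _
      _ = |(σ x).det - (σ z).det| := abs_sub_comm _ _
      _ ≤ K * ((n:ℝ) * ε) := hdd
  have hii : |dx⁻¹ - dz⁻¹| ≤ K * ((n:ℝ) * ε) * (K * K) := by
    have heq : dx⁻¹ - dz⁻¹ = (dz - dx) * (dx⁻¹ * dz⁻¹) := by
      field_simp
    rw [heq, abs_mul, abs_of_pos (mul_pos (inv_pos.mpr hdx0) (inv_pos.mpr hdz0))]
    apply mul_le_mul hdiffd _ (mul_nonneg (inv_pos.mpr hdx0).le (inv_pos.mpr hdz0).le)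
      (mul_nonneg hK0.le (mul_nonneg hn0.le hε0))
    exact mul_le_mul hdxK hdzK (inv_pos.mpr hdz0).le hK0.le
  -- combine
  have hkey : dx⁻¹ * tx ^ p - dz⁻¹ * tz ^ p
      = dx⁻¹ * (tx ^ p - tz ^ p) + tz ^ p * (dx⁻¹ - dz⁻¹) := by ring
  rw [hkey]
  calc |dx⁻¹ * (tx ^ p - tz ^ p) + tz ^ p * (dx⁻¹ - dz⁻¹)|
      ≤ |dx⁻¹ * (tx ^ p - tz ^ p)| + |tz ^ p * (dx⁻¹ - dz⁻¹)| := abs_add_le _ _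
    _ = dx⁻¹ * |tx ^ p - tz ^ p| + tz ^ p * |dx⁻¹ - dz⁻¹| := by
        rw [abs_mul, abs_mul, abs_of_pos (inv_pos.mpr hdx0), abs_of_nonneg htzp0]
    _ ≤ K * (p * Λ ^ (p - 1) * (Λ ^ 4 * ε)) + Λ ^ p * (K * ((n:ℝ) * ε) * (K * K)) := by
        apply add_le_add
        · exact mul_le_mul hdxK hpow (abs_nonneg _) hK0.le
        · exact mul_le_mul htzp hii (abs_nonneg _) (Real.rpow_nonneg hΛ0.le p)
    _ = c₀ * (K * p * Λ ^ (p - 1) * Λ ^ 4 + Λ ^ p * K ^ 3 * (n:ℝ)) * δ := by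
        rw [hεdef]; ring
end

section
/- Let n ≥ 1, α ∈ (1,2), Λ > 0, let M be a real n × n matrix with |M ξ| ≤ Λ|ξ| for all ξ ∈ ℝⁿ, and let x ∈ ℝⁿ. Define r(x) = √(1+|x|²) and g(y) = r(x + M y) − r(x) − 𝟙_{|y|<1}·⟨M y, x⟩/√(1+|x|²). Then g is integrable on ℝⁿ \ {0} with respect to the measure |y|^{−n−α} dy, and ∫_{ℝⁿ\{0}} g(y)·|y|^{−n−α} dy ≤ (Λ²/2)∫_{0<|y|<1} |y|^{2−n−α} dy + Λ ∫_{|y|≥1} |y|^{1−n−α} dy. -/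
open MeasureTheory
open scoped RealInnerProductSpace

section auxiliary
open Set Metric
open scoped ENNReal


-- Lipschitz-type bound
lemma my_sqrt_lip {u v : ℝ} (hu : 0 ≤ u) (hv : 0 ≤ v) :
    |Real.sqrt (1 + u ^ 2) - Real.sqrt (1 + v ^ 2)| ≤ |u - v| := by
  have hA2 : Real.sqrt (1 + u ^ 2) ^ 2 = 1 + u ^ 2 := Real.sq_sqrt (by positivity)
  have hB2 : Real.sqrt (1 + v ^ 2) ^ 2 = 1 + v ^ 2 := Real.sq_sqrt (by positivity)
  have hA0 : 0 ≤ Real.sqrt (1 + u ^ 2) := Real.sqrt_nonneg _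
  have hB0 : 0 ≤ Real.sqrt (1 + v ^ 2) := Real.sqrt_nonneg _
  set A := Real.sqrt (1 + u ^ 2)
  set B := Real.sqrt (1 + v ^ 2)
  have hAu : u ≤ A := by nlinarith
  have hBv : v ≤ B := by nlinarith
  rcases le_total v u with h | h
  · have hBA : B ≤ A := by nlinarith
    rw [abs_of_nonneg (by linarith), abs_of_nonneg (by linarith)]
    nlinarith [mul_nonneg (sub_nonneg.2 h) (show (0:ℝ) ≤ A + B - (u + v) by linarith)]
  · have hBA : A ≤ B := by nlinarith
    rw [abs_of_nonpos (by linarith), abs_of_nonpos (by linarith)]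
    nlinarith [mul_nonneg (sub_nonneg.2 h) (show (0:ℝ) ≤ A + B - (u + v) by linarith)]

section Taylor
variable {F : Type*} [NormedAddCommGroup F] [InnerProductSpace ℝ F]

lemma my_taylor (x z : F) :
    Real.sqrt (1 + ‖x + z‖ ^ 2) - Real.sqrt (1 + ‖x‖ ^ 2) -
      ⟪z, x⟫ / Real.sqrt (1 + ‖x‖ ^ 2) ∈ Set.Icc 0 (‖z‖ ^ 2 / 2) := by
  have ha2 : Real.sqrt (1 + ‖x‖ ^ 2) ^ 2 = 1 + ‖x‖ ^ 2 := Real.sq_sqrt (by positivity)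
  have hb2 : Real.sqrt (1 + ‖x + z‖ ^ 2) ^ 2 = 1 + ‖x + z‖ ^ 2 := Real.sq_sqrt (by positivity)
  set a := Real.sqrt (1 + ‖x‖ ^ 2)
  set b := Real.sqrt (1 + ‖x + z‖ ^ 2)
  set c := ⟪z, x⟫ with hc_def
  set t := ‖z‖
  set m := ‖x‖
  have hb2' : b ^ 2 = a ^ 2 + 2 * c + t ^ 2 := by
    rw [hb2, ha2, norm_add_sq_real, real_inner_comm]; ring
  have ha1 : 1 ≤ a := by
    rw [show (1:ℝ) = Real.sqrt 1 by simp]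
    exact Real.sqrt_le_sqrt (by nlinarith [sq_nonneg m])
  have ha0 : 0 < a := by linarith
  have hb0 : 0 ≤ b := Real.sqrt_nonneg _
  have hm0 : 0 ≤ m := norm_nonneg _
  have ht0 : 0 ≤ t := norm_nonneg _
  have hma : m ≤ a := by nlinarith
  have hc : |c| ≤ t * m := abs_real_inner_le_norm z x
  have hcl : -(t * m) ≤ c := neg_le_of_abs_le hc
  have hcu : c ≤ t * m := le_of_abs_le hc
  constructor
  · -- lower bound: a^2 + c ≤ a * b
    have hc2 : c ^ 2 ≤ t ^ 2 * a ^ 2 := by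
      nlinarith [sq_abs c, mul_self_le_mul_self (abs_nonneg c) hc,
        mul_le_mul_of_nonneg_left (mul_le_mul hma hma hm0 ha0.le) (mul_nonneg ht0 ht0)]
    have key : a ^ 2 + c ≤ a * b := by
      rcases le_or_gt (a ^ 2 + c) 0 with h | h
      · exact h.trans (mul_nonneg ha0.le hb0)
      · have hsq2 : (a ^ 2 + c) ^ 2 ≤ (a * b) ^ 2 := by nlinarith
        have := Real.sqrt_le_sqrt hsq2
        rwa [Real.sqrt_sq h.le, Real.sqrt_sq (mul_nonneg ha0.le hb0)] at this
    have : a + c / a ≤ b := by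
      rw [← mul_le_mul_iff_right₀ ha0]
      calc a * (a + c / a) = a ^ 2 + c := by field_simp
        _ ≤ a * b := key
    linarith
  · -- upper bound
    have hP : 0 < a ^ 2 + c + a * t ^ 2 / 2 := by
      nlinarith [sq_nonneg (t - 1), mul_nonneg (sub_nonneg.2 ha1) (sq_nonneg (t-1)),
        mul_nonneg ht0 (sub_nonneg.2 hma)]
    have hsq : (a * b) ^ 2 ≤ (a ^ 2 + c + a * t ^ 2 / 2) ^ 2 := by
      nlinarith [sq_nonneg (c + a * t ^ 2 / 2),
        mul_nonneg (mul_nonneg (sq_nonneg a) (sq_nonneg t)) (sub_nonneg.2 ha1)]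
    have hab : a * b ≤ a ^ 2 + c + a * t ^ 2 / 2 := by
      have := Real.sqrt_le_sqrt hsq
      rwa [Real.sqrt_sq (mul_nonneg ha0.le hb0), Real.sqrt_sq hP.le] at this
    have : b ≤ a + c / a + t ^ 2 / 2 := by
      rw [← mul_le_mul_iff_right₀ ha0]
      calc a * b ≤ a ^ 2 + c + a * t ^ 2 / 2 := hab
        _ = a * (a + c / a + t ^ 2 / 2) := by field_simp
    linarith
end Taylor

lemma my_integrableOn_comp_norm {n : ℕ} (hn : 1 ≤ n) {f : ℝ → ℝ} (hf : Measurable f)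
    (h : IntegrableOn (fun y : ℝ => y ^ (n - 1) * f y) (Set.Ioi (0 : ℝ))) :
    IntegrableOn (fun x : EuclideanSpace ℝ (Fin n) => f ‖x‖)
      ({0}ᶜ : Set (EuclideanSpace ℝ (Fin n))) := by
  set E := EuclideanSpace ℝ (Fin n)
  haveI : Nontrivial E := Module.nontrivial_of_finrank_pos (R := ℝ)
    (by rw [finrank_euclideanSpace_fin]; omega)
  have hdim : Module.finrank ℝ E - 1 = n - 1 := by rw [finrank_euclideanSpace_fin]
  have h1 : Integrable (fun y : Set.Ioi (0 : ℝ) => (y : ℝ) ^ (n - 1) * f y)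
      (Measure.comap Subtype.val volume) := by
    have e := (MeasurableEmbedding.subtype_coe (measurableSet_Ioi (a := (0:ℝ)))).integrable_map_iff
      (g := fun y : ℝ => y ^ (n - 1) * f y) (μ := Measure.comap Subtype.val volume)
    rw [map_comap_subtype_coe measurableSet_Ioi] at e
    exact e.mp h
  have h2 : Integrable (fun y : Set.Ioi (0 : ℝ) => f y)
      (Measure.volumeIoiPow (n - 1)) := by
    rw [Measure.volumeIoiPow, integrable_withDensity_iff
      ((measurable_subtype_coe.pow_const (n - 1)).ennreal_ofReal)
      (Filter.Eventually.of_forall fun _ => ENNReal.ofReal_lt_top)]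
    refine h1.congr (Filter.Eventually.of_forall fun y => ?_)
    show (y : ℝ) ^ (n - 1) * f y = f y * (ENNReal.ofReal ((y : ℝ) ^ (n - 1))).toReal
    rw [ENNReal.toReal_ofReal (pow_nonneg (le_of_lt y.2) _)]
    ring
  have h3 : Integrable
      (fun p : Metric.sphere (0 : E) 1 × Set.Ioi (0 : ℝ) => f p.2)
      ((volume : Measure E).toSphere.prod (Measure.volumeIoiPow (n - 1))) := by
    have hsm : Integrable (fun y : Set.Ioi (0 : ℝ) => f y)
        (((volume : Measure E).toSphere Set.univ) • Measure.volumeIoiPow (n - 1)) :=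
      h2.smul_measure (measure_ne_top _ _)
    rw [← Measure.map_snd_prod] at hsm
    exact hsm.comp_measurable measurable_snd
  rw [← hdim] at h3
  have h4 : Integrable
      ((fun p : Metric.sphere (0 : E) 1 × Set.Ioi (0 : ℝ) => f p.2) ∘
        (homeomorphUnitSphereProd E))
      ((volume : Measure E).comap Subtype.val) :=
    ((volume : Measure E).measurePreserving_homeomorphUnitSphereProd.integrable_comp_emb
      (Homeomorph.measurableEmbedding _)).mpr h3
  have h5 : Integrable (fun y : ({0}ᶜ : Set E) => f ‖(y : E)‖)
      ((volume : Measure E).comap Subtype.val) := by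
    refine h4.congr (Filter.Eventually.of_forall fun y => ?_)
    simp [Function.comp]
  rw [IntegrableOn, ← map_comap_subtype_coe (measurableSet_singleton (0 : E)).compl,
    (MeasurableEmbedding.subtype_coe
      (measurableSet_singleton (0 : E)).compl).integrable_map_iff]
  exact h5

noncomputable def myF (n : ℕ) (α c1 c2 : ℝ) : ℝ → ℝ := fun t =>
  if t < 1 then c1 * t ^ (2 - (n : ℝ) - α) else c2 * t ^ (1 - (n : ℝ) - α)

lemma my_key (n : ℕ) (hn : 1 ≤ n) {α : ℝ} (hα1 : 1 < α) (hα2 : α < 2) (c1 c2 : ℝ) :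
    IntegrableOn
      (fun x : EuclideanSpace ℝ (Fin n) => myF n α c1 c2 ‖x‖)
      ({0}ᶜ : Set (EuclideanSpace ℝ (Fin n))) := by
  have hcast : ((n - 1 : ℕ) : ℝ) = (n : ℝ) - 1 := by
    push_cast [Nat.cast_sub hn]; ring
  set f : ℝ → ℝ := myF n α c1 c2 with hf_def
  have hf_eq : ∀ t : ℝ, f t = if t < 1 then c1 * t ^ (2 - (n : ℝ) - α) else c2 * t ^ (1 - (n : ℝ) - α) := fun t => rfl
  have hf : Measurable f := by
    show Measurable fun t : ℝ =>
      if t < 1 then c1 * t ^ (2 - (n : ℝ) - α) else c2 * t ^ (1 - (n : ℝ) - α)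
    apply Measurable.ite (measurableSet_Iio (a := (1:ℝ)))
    · fun_prop
    · fun_prop
  refine my_integrableOn_comp_norm hn hf ?_
  have hIoo : IntegrableOn (fun y : ℝ => y ^ (n - 1) * f y) (Set.Ioo (0:ℝ) 1) := by
    have base : IntegrableOn (fun y : ℝ => c1 * y ^ (1 - α)) (Set.Ioo (0:ℝ) 1) := by
      have := intervalIntegral.intervalIntegrable_rpow' (a := 0) (b := 1)
        (show (-1:ℝ) < 1 - α by linarith)
      rw [intervalIntegrable_iff_integrableOn_Ioo_of_le zero_le_one] at this
      exact this.const_mul c1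
    refine base.congr_fun (fun y hy => ?_) measurableSet_Ioo
    have hy0 : (0:ℝ) < y := hy.1
    rw [hf_eq]
    simp only [if_pos hy.2]
    rw [← Real.rpow_natCast y (n - 1), hcast,
      show (1:ℝ) - α = ((n:ℝ) - 1) + (2 - (n:ℝ) - α) by ring, Real.rpow_add hy0]
    ring
  have hIci : IntegrableOn (fun y : ℝ => y ^ (n - 1) * f y) (Set.Ici (1:ℝ)) := by
    have base : IntegrableOn (fun y : ℝ => c2 * y ^ (-α)) (Set.Ici (1:ℝ)) := by
      have := (integrableOn_Ioi_rpow_of_lt (show -α < -1 by linarith) zero_lt_one).const_mul c2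
      exact IntegrableOn.congr_set_ae this Ioi_ae_eq_Ici.symm
    refine base.congr_fun (fun y hy => ?_) measurableSet_Ici
    have hy0 : (0:ℝ) < y := lt_of_lt_of_le zero_lt_one hy
    rw [hf_eq]
    simp only [if_neg (not_lt.2 (Set.mem_Ici.mp hy))]
    rw [← Real.rpow_natCast y (n - 1), hcast,
      show -α = ((n:ℝ) - 1) + (1 - (n:ℝ) - α) by ring, Real.rpow_add hy0]
    ring
  have hu : Set.Ioo (0:ℝ) 1 ∪ Set.Ici 1 = Set.Ioi 0 := Set.Ioo_union_Ici_eq_Ioi zero_lt_one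
  rw [← hu]
  exact hIoo.union hIci

end auxiliary

open Set Metric in
/-- Bound on the jump part of the generator applied to the Lyapunov function
`r(x) = √(1+|x|²)`: with `g(y) = r(x+My) − r(x) − 𝟙_{|y|<1}⟨My,x⟩/√(1+|x|²)` and
`|Mξ| ≤ Λ|ξ|`, the function `g` is integrable against `|y|^{−n−α} dy` on `ℝⁿ\{0}`
and `∫ g dν ≤ (Λ²/2)∫_{0<|y|<1}|y|^{2−n−α} dy + Λ∫_{|y|≥1}|y|^{1−n−α} dy`. -/
theorem stmt_14 (n : ℕ) (hn : 1 ≤ n) (α Λ : ℝ) (hα : α ∈ Set.Ioo (1 : ℝ) 2)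
    (hΛ : 0 < Λ)
    (M : EuclideanSpace ℝ (Fin n) →ₗ[ℝ] EuclideanSpace ℝ (Fin n))
    (hM : ∀ ξ, ‖M ξ‖ ≤ Λ * ‖ξ‖) (x : EuclideanSpace ℝ (Fin n)) :
    IntegrableOn
      (fun y =>
        (Real.sqrt (1 + ‖x + M y‖ ^ 2) - Real.sqrt (1 + ‖x‖ ^ 2) -
            (if ‖y‖ < 1 then ⟪M y, x⟫ / Real.sqrt (1 + ‖x‖ ^ 2) else 0)) *
          ‖y‖ ^ (-(n : ℝ) - α))
      ({0}ᶜ : Set (EuclideanSpace ℝ (Fin n))) ∧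
    (∫ y in ({0}ᶜ : Set (EuclideanSpace ℝ (Fin n))),
        (Real.sqrt (1 + ‖x + M y‖ ^ 2) - Real.sqrt (1 + ‖x‖ ^ 2) -
            (if ‖y‖ < 1 then ⟪M y, x⟫ / Real.sqrt (1 + ‖x‖ ^ 2) else 0)) *
          ‖y‖ ^ (-(n : ℝ) - α)) ≤
      Λ ^ 2 / 2 *
          (∫ y in (Metric.ball (0 : EuclideanSpace ℝ (Fin n)) 1 \ {0}),
            ‖y‖ ^ (2 - (n : ℝ) - α)) +
        Λ * ∫ y in {y : EuclideanSpace ℝ (Fin n) | 1 ≤ ‖y‖},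
            ‖y‖ ^ (1 - (n : ℝ) - α) := by
  obtain ⟨hα1, hα2⟩ := hα
  set G : EuclideanSpace ℝ (Fin n) → ℝ := fun y =>
    (Real.sqrt (1 + ‖x + M y‖ ^ 2) - Real.sqrt (1 + ‖x‖ ^ 2) -
        (if ‖y‖ < 1 then ⟪M y, x⟫ / Real.sqrt (1 + ‖x‖ ^ 2) else 0)) *
      ‖y‖ ^ (-(n : ℝ) - α) with hG_def
  have hMc : Continuous fun y : EuclideanSpace ℝ (Fin n) => M y :=
    M.continuous_of_finiteDimensional
  -- rpow algebra
  have hrw2 : ∀ y : EuclideanSpace ℝ (Fin n), y ≠ 0 →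
      ‖y‖ ^ 2 * ‖y‖ ^ (-(n : ℝ) - α) = ‖y‖ ^ (2 - (n : ℝ) - α) := by
    intro y hy
    have hy0 : (0:ℝ) < ‖y‖ := norm_pos_iff.2 hy
    rw [← Real.rpow_natCast ‖y‖ 2, ← Real.rpow_add hy0]
    norm_num
    congr 1
    ring
  have hrw1 : ∀ y : EuclideanSpace ℝ (Fin n), y ≠ 0 →
      ‖y‖ * ‖y‖ ^ (-(n : ℝ) - α) = ‖y‖ ^ (1 - (n : ℝ) - α) := by
    intro y hy
    have hy0 : (0:ℝ) < ‖y‖ := norm_pos_iff.2 hy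
    rw [show ‖y‖ * ‖y‖ ^ (-(n : ℝ) - α) = ‖y‖ ^ (1:ℝ) * ‖y‖ ^ (-(n : ℝ) - α) by
        rw [Real.rpow_one], ← Real.rpow_add hy0]
    congr 1
    ring
  -- pointwise bound
  have hGb : ∀ y : EuclideanSpace ℝ (Fin n), y ≠ 0 →
      ‖G y‖ ≤ myF n α (Λ ^ 2 / 2) Λ ‖y‖ := by
    intro y hy
    have hy0 : (0:ℝ) < ‖y‖ := norm_pos_iff.2 hy
    have hw : (0:ℝ) ≤ ‖y‖ ^ (-(n : ℝ) - α) := Real.rpow_nonneg (norm_nonneg y) _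
    have hMy := hM y
    rw [hG_def]
    simp only [Real.norm_eq_abs, abs_mul, abs_of_nonneg hw]
    by_cases h1 : ‖y‖ < 1
    · have ht := my_taylor x (M y)
      have hub : |Real.sqrt (1 + ‖x + M y‖ ^ 2) - Real.sqrt (1 + ‖x‖ ^ 2) -
          ⟪M y, x⟫ / Real.sqrt (1 + ‖x‖ ^ 2)| ≤ Λ ^ 2 * ‖y‖ ^ 2 / 2 := by
        rw [abs_le]
        have hsq : ‖M y‖ ^ 2 ≤ (Λ * ‖y‖) ^ 2 := by
          nlinarith [norm_nonneg (M y), norm_nonneg y, hMy, hΛ]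
        constructor
        · nlinarith [ht.1, mul_nonneg (sq_nonneg Λ) (sq_nonneg ‖y‖)]
        · have := ht.2
          nlinarith
      rw [if_pos h1]
      show |_| * _ ≤ myF n α (Λ ^ 2 / 2) Λ ‖y‖
      rw [show myF n α (Λ ^ 2 / 2) Λ ‖y‖ = Λ ^ 2 / 2 * ‖y‖ ^ (2 - (n : ℝ) - α) by
        simp [myF, h1]]
      rw [← hrw2 y hy]
      calc |Real.sqrt (1 + ‖x + M y‖ ^ 2) - Real.sqrt (1 + ‖x‖ ^ 2) -
          ⟪M y, x⟫ / Real.sqrt (1 + ‖x‖ ^ 2)| * ‖y‖ ^ (-(n : ℝ) - α)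
          ≤ (Λ ^ 2 * ‖y‖ ^ 2 / 2) * ‖y‖ ^ (-(n : ℝ) - α) := by
            exact mul_le_mul_of_nonneg_right hub hw
        _ = Λ ^ 2 / 2 * (‖y‖ ^ 2 * ‖y‖ ^ (-(n : ℝ) - α)) := by ring
    · have hub : |Real.sqrt (1 + ‖x + M y‖ ^ 2) - Real.sqrt (1 + ‖x‖ ^ 2) - 0|
          ≤ Λ * ‖y‖ := by
        rw [sub_zero]
        have h2 := my_sqrt_lip (norm_nonneg (x + M y)) (norm_nonneg x)
        have h3 : |‖x + M y‖ - ‖x‖| ≤ ‖M y‖ := by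
          simpa [add_sub_cancel_left] using abs_norm_sub_norm_le (x + M y) x
        linarith [hMy]
      rw [if_neg h1]
      rw [show myF n α (Λ ^ 2 / 2) Λ ‖y‖ = Λ * ‖y‖ ^ (1 - (n : ℝ) - α) by
        simp only [myF, if_neg h1]]
      rw [← hrw1 y hy]
      calc |Real.sqrt (1 + ‖x + M y‖ ^ 2) - Real.sqrt (1 + ‖x‖ ^ 2) - 0| *
            ‖y‖ ^ (-(n : ℝ) - α)
          ≤ (Λ * ‖y‖) * ‖y‖ ^ (-(n : ℝ) - α) := mul_le_mul_of_nonneg_right hub hw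
        _ = Λ * (‖y‖ * ‖y‖ ^ (-(n : ℝ) - α)) := by ring
  -- measurability of G
  have hGm : Measurable G := by
    have m1 : Measurable fun y : EuclideanSpace ℝ (Fin n) =>
        Real.sqrt (1 + ‖x + M y‖ ^ 2) :=
      (Real.continuous_sqrt.comp
        (continuous_const.add (((continuous_const.add hMc).norm).pow 2))).measurable
    have mIf : Measurable fun y : EuclideanSpace ℝ (Fin n) =>
        (if ‖y‖ < 1 then ⟪M y, x⟫ / Real.sqrt (1 + ‖x‖ ^ 2) else 0) := by
      apply Measurable.ite (measurableSet_lt measurable_norm measurable_const)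
      · exact ((hMc.inner continuous_const).measurable).div_const _
      · exact measurable_const
    have mW : Measurable fun y : EuclideanSpace ℝ (Fin n) => ‖y‖ ^ (-(n : ℝ) - α) := by
      fun_prop
    exact (((m1.sub measurable_const).sub mIf).mul mW)
  -- main integrability
  have hIntG : IntegrableOn G ({0}ᶜ : Set (EuclideanSpace ℝ (Fin n))) := by
    refine Integrable.mono' (my_key n hn hα1 hα2 (Λ ^ 2 / 2) Λ)
      hGm.aestronglyMeasurable.restrict ?_
    filter_upwards [ae_restrict_mem (measurableSet_singleton
      (0 : EuclideanSpace ℝ (Fin n))).compl] with y hy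
    exact hGb y hy
  refine ⟨hIntG, ?_⟩
  -- sets
  have hsets : (Metric.ball (0 : EuclideanSpace ℝ (Fin n)) 1 \ {0}) ∪
      {y : EuclideanSpace ℝ (Fin n) | 1 ≤ ‖y‖} =
      ({0}ᶜ : Set (EuclideanSpace ℝ (Fin n))) := by
    ext y
    simp only [Set.mem_union, Set.mem_diff, Metric.mem_ball, dist_zero_right,
      Set.mem_singleton_iff, Set.mem_compl_iff, Set.mem_setOf_eq]
    constructor
    · rintro (⟨_, h⟩ | h)
      · exact h
      · intro h0
        rw [h0, norm_zero] at h
        linarith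
    · intro h
      by_cases h1 : ‖y‖ < 1
      · exact Or.inl ⟨h1, h⟩
      · exact Or.inr (not_lt.1 h1)
  have hsub1 : (Metric.ball (0 : EuclideanSpace ℝ (Fin n)) 1 \ {0}) ⊆
      ({0}ᶜ : Set (EuclideanSpace ℝ (Fin n))) := fun y hy => hy.2
  have hsub2 : {y : EuclideanSpace ℝ (Fin n) | 1 ≤ ‖y‖} ⊆
      ({0}ᶜ : Set (EuclideanSpace ℝ (Fin n))) := by
    intro y hy
    simp only [Set.mem_compl_iff, Set.mem_singleton_iff]
    intro h0
    rw [Set.mem_setOf_eq, h0, norm_zero] at hy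
    linarith
  have hmeasb : MeasurableSet (Metric.ball (0 : EuclideanSpace ℝ (Fin n)) 1 \ {0}) :=
    measurableSet_ball.diff (measurableSet_singleton _)
  have hmeas2 : MeasurableSet {y : EuclideanSpace ℝ (Fin n) | 1 ≤ ‖y‖} :=
    (isClosed_le continuous_const continuous_norm).measurableSet
  have hdisj : Disjoint (Metric.ball (0 : EuclideanSpace ℝ (Fin n)) 1 \ {0})
      {y : EuclideanSpace ℝ (Fin n) | 1 ≤ ‖y‖} := by
    rw [Set.disjoint_left]
    rintro y ⟨hy1, -⟩ hy2
    rw [Metric.mem_ball, dist_zero_right] at hy1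
    rw [Set.mem_setOf_eq] at hy2
    linarith
  have hI1 : IntegrableOn G (Metric.ball (0 : EuclideanSpace ℝ (Fin n)) 1 \ {0}) :=
    hIntG.mono_set hsub1
  have hI2 : IntegrableOn G {y : EuclideanSpace ℝ (Fin n) | 1 ≤ ‖y‖} :=
    hIntG.mono_set hsub2
  have hIb : IntegrableOn (fun y : EuclideanSpace ℝ (Fin n) => ‖y‖ ^ (2 - (n : ℝ) - α))
      (Metric.ball (0 : EuclideanSpace ℝ (Fin n)) 1 \ {0}) := by
    refine ((my_key n hn hα1 hα2 1 0).mono_set hsub1).congr_fun (fun y hy => ?_) hmeasb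
    have h1 : ‖y‖ < 1 := by
      have := hy.1; rwa [Metric.mem_ball, dist_zero_right] at this
    simp [myF, h1]
  have hIt : IntegrableOn (fun y : EuclideanSpace ℝ (Fin n) => ‖y‖ ^ (1 - (n : ℝ) - α))
      {y : EuclideanSpace ℝ (Fin n) | 1 ≤ ‖y‖} := by
    refine ((my_key n hn hα1 hα2 0 1).mono_set hsub2).congr_fun (fun y hy => ?_) hmeas2
    have h1 : ¬ ‖y‖ < 1 := not_lt.2 hy
    simp [myF, h1]
  rw [← hsets, setIntegral_union hdisj hmeas2 hI1 hI2]
  have hb1 : ∫ y in (Metric.ball (0 : EuclideanSpace ℝ (Fin n)) 1 \ {0}), G y ≤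
      Λ ^ 2 / 2 * ∫ y in (Metric.ball (0 : EuclideanSpace ℝ (Fin n)) 1 \ {0}),
        ‖y‖ ^ (2 - (n : ℝ) - α) := by
    rw [← integral_const_mul]
    refine setIntegral_mono_on hI1 (hIb.const_mul _) hmeasb fun y hy => ?_
    have h1 : ‖y‖ < 1 := by
      have := hy.1; rwa [Metric.mem_ball, dist_zero_right] at this
    have := hGb y (hsub1 hy)
    rw [show myF n α (Λ ^ 2 / 2) Λ ‖y‖ = Λ ^ 2 / 2 * ‖y‖ ^ (2 - (n : ℝ) - α) by
      simp [myF, h1]] at this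
    calc G y ≤ ‖G y‖ := le_abs_self _
      _ ≤ _ := this
  have hb2 : ∫ y in {y : EuclideanSpace ℝ (Fin n) | 1 ≤ ‖y‖}, G y ≤
      Λ * ∫ y in {y : EuclideanSpace ℝ (Fin n) | 1 ≤ ‖y‖}, ‖y‖ ^ (1 - (n : ℝ) - α) := by
    rw [← integral_const_mul]
    refine setIntegral_mono_on hI2 (hIt.const_mul _) hmeas2 fun y hy => ?_
    have h1 : ¬ ‖y‖ < 1 := not_lt.2 hy
    have := hGb y (hsub2 hy)
    rw [show myF n α (Λ ^ 2 / 2) Λ ‖y‖ = Λ * ‖y‖ ^ (1 - (n : ℝ) - α) by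
      simp only [myF, if_neg h1]] at this
    calc G y ≤ ‖G y‖ := le_abs_self _
      _ ≤ _ := this
  exact add_le_add hb1 hb2
end
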